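/- Let q : ℤ → ℝ be nonnegative and finitely supported, and let H be the guided Schrödinger operator on ℓ²(ℤ²) associated with q. Then the interval [0, 8] is contained in the real spectrum of H, i.e., for every x ∈ [0,8] one has (x : ℂ) ∈ spectrum ℂ H. -/

import Mathlib

set_option maxHeartbeats 1000000

lemma two_cos_aux (θ : ℝ) :
    Complex.exp ((θ : ℂ) * Complex.I) + Complex.exp (((-θ : ℝ) : ℂ) * Complex.I)
      = 2 * (Real.cos θ : ℂ) := by
  rw [Complex.exp_mul_I, Complex.exp_mul_I, Complex.ofReal_cos]
  push_cast
  rw [Complex.cos_neg, Complex.sin_neg]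
  ring

lemma exp_shift (a θ : ℝ) :
    Complex.exp (((a + θ : ℝ) : ℂ) * Complex.I) + Complex.exp (((a - θ : ℝ) : ℂ) * Complex.I)
      = 2 * (Real.cos θ : ℂ) * Complex.exp ((a : ℂ) * Complex.I) := by
  have h1 : ((a + θ : ℝ) : ℂ) * Complex.I = (a : ℂ) * Complex.I + (θ : ℂ) * Complex.I := by
    push_cast; ring
  have h2 : ((a - θ : ℝ) : ℂ) * Complex.I = (a : ℂ) * Complex.I + ((-θ : ℝ) : ℂ) * Complex.I := by
    push_cast; ring
  rw [h1, h2, Complex.exp_add, Complex.exp_add, ← mul_add, two_cos_aux]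
  ring

lemma weyl_estimate (q : ℤ → ℝ)
    (H : lp (fun _ : ℤ × ℤ => ℂ) 2 →L[ℂ] lp (fun _ : ℤ × ℤ => ℂ) 2)
    (hH : ∀ (f : lp (fun _ : ℤ × ℤ => ℂ) 2) (m₁ m₂ : ℤ),
      H f (m₁, m₂) = 4 * f (m₁, m₂) - f (m₁ + 1, m₂) - f (m₁ - 1, m₂)
        - f (m₁, m₂ + 1) - f (m₁, m₂ - 1) - (q m₂ : ℂ) * f (m₁, m₂))
    (x θ₁ θ₂ : ℝ) (hx : |x| ≤ 8)
    (hcos : 2 * Real.cos θ₁ + 2 * Real.cos θ₂ = 4 - x)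
    (L : ℤ) (hL : ∀ m : ℤ, L ≤ m → q m = 0)
    (C : ℝ)
    (hC : ∀ f, ‖f‖ ≤ C * ‖(algebraMap ℂ _ (x : ℂ) - H) f‖)
    (n : ℕ) (hn : 3 ≤ n) :
    (n : ℝ)^2 ≤ C^2 * (2048 * n) := by
  set N : ℤ := (n : ℤ) with hN
  set g : ℤ × ℤ → ℂ := fun m =>
    if 0 ≤ m.1 ∧ m.1 < N ∧ L ≤ m.2 ∧ m.2 < L + N
    then Complex.exp (((θ₁ * m.1 + θ₂ * m.2 : ℝ) : ℂ) * Complex.I) else 0 with hgdef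
  set box : Finset (ℤ × ℤ) := Finset.Icc 0 (N-1) ×ˢ Finset.Icc L (L+N-1) with hbox
  have hgeq : ∀ m : ℤ × ℤ, g m =
      (if 0 ≤ m.1 ∧ m.1 < N ∧ L ≤ m.2 ∧ m.2 < L + N
       then Complex.exp (((θ₁ * m.1 + θ₂ * m.2 : ℝ) : ℂ) * Complex.I) else 0) := fun _ => rfl
  have hsupp : ∀ m ∉ box, g m = 0 := by
    intro m hm
    rw [hgeq]
    simp only [hbox, Finset.mem_product, Finset.mem_Icc, not_and_or, not_le, not_lt] at hm
    exact if_neg (by omega)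
  have hle1 : ∀ m, ‖g m‖ ≤ 1 := by
    intro m
    rw [hgeq]
    by_cases h : 0 ≤ m.1 ∧ m.1 < N ∧ L ≤ m.2 ∧ m.2 < L + N
    · rw [if_pos h, Complex.norm_exp_ofReal_mul_I]
    · rw [if_neg h]; simp
  have hg : Memℓp g 2 := by
    apply memℓp_gen
    apply summable_of_ne_finset_zero (s := box)
    intro m hm
    rw [hsupp m hm]
    simp
  set f : lp (fun _ : ℤ × ℤ => ℂ) 2 := ⟨g, hg⟩ with hf
  have hfm : ∀ m₁ m₂ : ℤ, f (m₁, m₂) = g (m₁, m₂) := fun _ _ => rfl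
  have hfm' : ∀ m : ℤ × ℤ, f m = g m := fun _ => rfl
  have hp2 : (0:ℝ) < (2 : ENNReal).toReal := by norm_num
  have htoreal : ((2 : ENNReal).toReal) = (2:ℝ) := by norm_num
  -- norm of f
  have hnormf : ‖f‖ ^ (2:ℝ) = (n : ℝ)^2 := by
    have h0 := lp.norm_rpow_eq_tsum hp2 f
    rw [htoreal] at h0
    rw [h0, tsum_eq_sum (s := box) (f := fun m => ‖f m‖ ^ (2:ℝ))
        (by intro m hm; simp [hfm' m, hsupp m hm, Real.zero_rpow])]
    have hone : ∀ m ∈ box, ‖f m‖ ^ (2:ℝ) = 1 := by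
      intro m hm
      have hmem : 0 ≤ m.1 ∧ m.1 < N ∧ L ≤ m.2 ∧ m.2 < L + N := by
        simp only [hbox, Finset.mem_product, Finset.mem_Icc] at hm; omega
      rw [hfm' m, hgeq m, if_pos hmem,
        Complex.norm_exp_ofReal_mul_I, Real.one_rpow]
    rw [Finset.sum_congr rfl hone, Finset.sum_const, nsmul_eq_mul, mul_one, hbox,
      Finset.card_product, Int.card_Icc, Int.card_Icc]
    have e1 : (N - 1 + 1 - 0).toNat = n := by omega
    have e2 : (L + N - 1 + 1 - L).toNat = n := by omega
    rw [e1, e2]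
    push_cast
    ring
  -- the operator T
  set T := algebraMap ℂ (lp (fun _ : ℤ × ℤ => ℂ) 2 →L[ℂ] lp (fun _ : ℤ × ℤ => ℂ) 2) (x:ℂ) - H
    with hT
  have halg : (algebraMap ℂ (lp (fun _ : ℤ × ℤ => ℂ) 2 →L[ℂ] lp (fun _ : ℤ × ℤ => ℂ) 2) (x:ℂ))
      = (x:ℂ) • (1 : lp (fun _ : ℤ × ℤ => ℂ) 2 →L[ℂ] lp (fun _ : ℤ × ℤ => ℂ) 2) :=
    Algebra.algebraMap_eq_smul_one _
  have hTf : ∀ m₁ m₂ : ℤ, (T f) (m₁, m₂) = (x:ℂ) * g (m₁, m₂) - H f (m₁, m₂) := by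
    intro m₁ m₂
    have h1 := lp.coeFn_sub
      ((algebraMap ℂ (lp (fun _ : ℤ × ℤ => ℂ) 2 →L[ℂ] lp (fun _ : ℤ × ℤ => ℂ) 2) (x:ℂ)) f) (H f)
    rw [hT, ContinuousLinearMap.sub_apply, h1]
    simp only [Pi.sub_apply]
    have h2 := lp.coeFn_smul (x:ℂ) f
    rw [halg, ContinuousLinearMap.smul_apply, ContinuousLinearMap.one_apply, h2, Pi.smul_apply, smul_eq_mul, hfm]
  -- boundary set
  set big : Finset (ℤ × ℤ) := Finset.Icc (-1) N ×ˢ Finset.Icc (L-1) (L+N) with hbig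
  set small : Finset (ℤ × ℤ) := Finset.Icc 1 (N-2) ×ˢ Finset.Icc (L+1) (L+N-2) with hsmall
  set S : Finset (ℤ × ℤ) := big \ small with hSdef
  have hzero : ∀ m : ℤ × ℤ, m ∉ S → (T f) m = 0 := by
    rintro ⟨m₁, m₂⟩ hm
    rw [hTf m₁ m₂, hH f m₁ m₂]
    simp only [hfm]
    rw [hSdef, Finset.mem_sdiff, not_and_or, not_not] at hm
    rw [hgeq (m₁, m₂), hgeq (m₁+1, m₂), hgeq (m₁-1, m₂), hgeq (m₁, m₂+1), hgeq (m₁, m₂-1)]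
    simp only
    rcases hm with hm | hm
    · simp only [hbig, Finset.mem_product, Finset.mem_Icc, not_and_or, not_le, not_lt] at hm
      rw [if_neg (by omega), if_neg (by omega), if_neg (by omega), if_neg (by omega),
        if_neg (by omega)]
      ring
    · simp only [hsmall, Finset.mem_product, Finset.mem_Icc] at hm
      have hq2 : q m₂ = 0 := hL m₂ (by omega)
      rw [if_pos (by omega), if_pos (by omega), if_pos (by omega), if_pos (by omega),
        if_pos (by omega), hq2]
      set a : ℝ := θ₁ * (m₁ : ℝ) + θ₂ * (m₂ : ℝ) with ha
      have e1 : θ₁ * ((m₁ + 1 : ℤ) : ℝ) + θ₂ * (m₂ : ℝ) = a + θ₁ := by push_cast; ring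
      have e2 : θ₁ * ((m₁ - 1 : ℤ) : ℝ) + θ₂ * (m₂ : ℝ) = a - θ₁ := by push_cast; ring
      have e3 : θ₁ * (m₁ : ℝ) + θ₂ * ((m₂ + 1 : ℤ) : ℝ) = a + θ₂ := by push_cast; ring
      have e4 : θ₁ * (m₁ : ℝ) + θ₂ * ((m₂ - 1 : ℤ) : ℝ) = a - θ₂ := by push_cast; ring
      rw [e1, e2, e3, e4]
      have hcosC : (2:ℂ) * (Real.cos θ₁ : ℂ) + 2 * (Real.cos θ₂ : ℂ) = 4 - (x:ℂ) := by
        exact_mod_cast congrArg (fun t : ℝ => (t : ℂ)) hcos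
      have s1 := exp_shift a θ₁
      have s2 := exp_shift a θ₂
      push_cast at s1 s2 hcosC ⊢
      linear_combination s1 + s2 + Complex.exp ((a:ℂ) * Complex.I) * hcosC
  -- pointwise bound
  have hbound : ∀ m : ℤ × ℤ, ‖(T f) m‖ ≤ 16 := by
    rintro ⟨m₁, m₂⟩
    rw [hTf m₁ m₂, hH f m₁ m₂]
    simp only [hfm]
    have hq0 : (q m₂ : ℂ) * g (m₁, m₂) = 0 := by
      by_cases hc : 0 ≤ m₁ ∧ m₁ < N ∧ L ≤ m₂ ∧ m₂ < L + N
      · rw [hL m₂ (by omega)]; simp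
      · rw [hgeq (m₁, m₂), if_neg (by simpa using hc), mul_zero]
    have h0 := hle1 (m₁, m₂); have h1 := hle1 (m₁+1, m₂); have h2 := hle1 (m₁-1, m₂)
    have h3 := hle1 (m₁, m₂+1); have h4 := hle1 (m₁, m₂-1)
    have hxg : ‖(x:ℂ) * g (m₁, m₂)‖ ≤ 8 := by
      rw [norm_mul, Complex.norm_real, Real.norm_eq_abs]
      calc |x| * ‖g (m₁, m₂)‖ ≤ 8 * 1 :=
        mul_le_mul hx h0 (norm_nonneg _) (by norm_num)
      _ = 8 := by norm_num
    have h4g : ‖(4:ℂ) * g (m₁, m₂)‖ ≤ 4 := by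
      rw [norm_mul]
      calc ‖(4:ℂ)‖ * ‖g (m₁, m₂)‖ ≤ 4 * 1 :=
        mul_le_mul (by norm_num) h0 (norm_nonneg _) (by norm_num)
      _ = 4 := by norm_num
    rw [hq0, sub_zero]
    calc ‖(x:ℂ) * g (m₁, m₂) - (4 * g (m₁, m₂) - g (m₁+1, m₂) - g (m₁-1, m₂)
          - g (m₁, m₂+1) - g (m₁, m₂-1))‖
        ≤ ‖(x:ℂ) * g (m₁, m₂)‖ + ‖4 * g (m₁, m₂) - g (m₁+1, m₂) - g (m₁-1, m₂)
          - g (m₁, m₂+1) - g (m₁, m₂-1)‖ := norm_sub_le _ _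
      _ ≤ ‖(x:ℂ) * g (m₁, m₂)‖ + (‖4 * g (m₁, m₂) - g (m₁+1, m₂) - g (m₁-1, m₂)
          - g (m₁, m₂+1)‖ + ‖g (m₁, m₂-1)‖) := by
          gcongr; exact norm_sub_le _ _
      _ ≤ ‖(x:ℂ) * g (m₁, m₂)‖ + (‖4 * g (m₁, m₂) - g (m₁+1, m₂) - g (m₁-1, m₂)‖
          + ‖g (m₁, m₂+1)‖ + ‖g (m₁, m₂-1)‖) := by
          gcongr ‖(x:ℂ) * g (m₁, m₂)‖ + (?_ + ‖g (m₁, m₂-1)‖); exact norm_sub_le _ _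
      _ ≤ ‖(x:ℂ) * g (m₁, m₂)‖ + (‖4 * g (m₁, m₂) - g (m₁+1, m₂)‖ + ‖g (m₁-1, m₂)‖
          + ‖g (m₁, m₂+1)‖ + ‖g (m₁, m₂-1)‖) := by
          gcongr ‖(x:ℂ) * g (m₁, m₂)‖ + (?_ + ‖g (m₁, m₂+1)‖ + ‖g (m₁, m₂-1)‖)
          exact norm_sub_le _ _
      _ ≤ ‖(x:ℂ) * g (m₁, m₂)‖ + (‖(4:ℂ) * g (m₁, m₂)‖ + ‖g (m₁+1, m₂)‖ + ‖g (m₁-1, m₂)‖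
          + ‖g (m₁, m₂+1)‖ + ‖g (m₁, m₂-1)‖) := by
          gcongr ‖(x:ℂ) * g (m₁, m₂)‖ + (?_ + ‖g (m₁-1, m₂)‖ + ‖g (m₁, m₂+1)‖ + ‖g (m₁, m₂-1)‖)
          exact norm_sub_le _ _
      _ ≤ 16 := by linarith
  -- cardinality of S
  have hsub : small ⊆ big := by
    intro m hm
    simp only [hsmall, hbig, Finset.mem_product, Finset.mem_Icc] at *
    omega
  have hScard : S.card = 8 * n := by
    rw [hSdef, Finset.card_sdiff_of_subset hsub, hbig, hsmall, Finset.card_product,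
      Finset.card_product, Int.card_Icc, Int.card_Icc, Int.card_Icc, Int.card_Icc]
    have e1 : (N + 1 - (-1)).toNat = n + 2 := by omega
    have e2 : (L + N + 1 - (L - 1)).toNat = n + 2 := by omega
    have e3 : (N - 2 + 1 - 1).toNat = n - 2 := by omega
    have e4 : (L + N - 2 + 1 - (L + 1)).toNat = n - 2 := by omega
    rw [e1, e2, e3, e4]
    obtain ⟨k, rfl⟩ := Nat.exists_eq_add_of_le hn
    have : (3 + k + 2) * (3 + k + 2) = (3 + k - 2) * (3 + k - 2) + 8 * (3 + k) := by
      have h5 : 3 + k - 2 = k + 1 := by omega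
      rw [h5]; ring
    omega
  -- norm of T f
  have hTnorm : ‖T f‖ ^ (2:ℝ) ≤ 2048 * n := by
    have h0 := lp.norm_rpow_eq_tsum hp2 (T f)
    rw [htoreal] at h0
    rw [h0, tsum_eq_sum (s := S) (f := fun m => ‖(T f) m‖ ^ (2:ℝ))
        (by intro m hm; simp [hzero m hm, Real.zero_rpow])]
    have hterm : ∀ m ∈ S, ‖(T f) m‖ ^ (2:ℝ) ≤ 256 := by
      intro m _
      rw [Real.rpow_two]
      calc ‖(T f) m‖ ^ 2 ≤ 16 ^ 2 := pow_le_pow_left₀ (norm_nonneg _) (hbound m) 2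
        _ = 256 := by norm_num
    calc ∑ m ∈ S, ‖(T f) m‖ ^ (2:ℝ) ≤ S.card • (256:ℝ) :=
          Finset.sum_le_card_nsmul S _ 256 hterm
      _ = (8 * n : ℕ) * 256 := by rw [hScard, nsmul_eq_mul]
      _ = 2048 * n := by push_cast; ring
  -- conclusion
  have hff := hC f

  have hTnorm2 : ‖T f‖ ^ 2 ≤ 2048 * n := by rw [← Real.rpow_two]; exact hTnorm
  have hnormf2 : ‖f‖ ^ 2 = (n:ℝ) ^ 2 := by rw [← Real.rpow_two]; exact hnormf
  have hCnonneg : 0 ≤ C * ‖T f‖ := le_trans (norm_nonneg f) hff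
  calc (n:ℝ) ^ 2 = ‖f‖ ^ 2 := hnormf2.symm
    _ ≤ (C * ‖T f‖) ^ 2 := pow_le_pow_left₀ (norm_nonneg f) hff 2
    _ = C ^ 2 * ‖T f‖ ^ 2 := mul_pow _ _ _
    _ ≤ C ^ 2 * (2048 * n) := mul_le_mul_of_nonneg_left hTnorm2 (sq_nonneg C)

lemma inv_bound {X : Type*} [NormedAddCommGroup X] [NormedSpace ℂ X]
    (A : X →L[ℂ] X) (h : IsUnit A) : ∃ C : ℝ, 0 ≤ C ∧ ∀ f, ‖f‖ ≤ C * ‖A f‖ := by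
  obtain ⟨u, hu⟩ := h
  set B : X →L[ℂ] X := ↑u⁻¹ with hB
  refine ⟨‖B‖, norm_nonneg _, fun f => ?_⟩
  have h1 : B (A f) = f := by
    have : (B * A) f = f := by rw [hB, ← hu, Units.inv_mul]; simp
    simpa [ContinuousLinearMap.mul_apply] using this
  calc ‖f‖ = ‖B (A f)‖ := by rw [h1]
    _ ≤ ‖B‖ * ‖A f‖ := ContinuousLinearMap.le_opNorm _ _

/-- The guided band statement on the square lattice: the unperturbed spectrum `[0,8]`
is contained in the real spectrum of the guided Schrödinger operator `H`. -/
theorem guided_contains_unperturbed_spectrum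
    (q : ℤ → ℝ) (hq : ∀ n, 0 ≤ q n) (hqfin : (Function.support q).Finite)
    (H : lp (fun _ : ℤ × ℤ => ℂ) 2 →L[ℂ] lp (fun _ : ℤ × ℤ => ℂ) 2)
    (hH : ∀ (f : lp (fun _ : ℤ × ℤ => ℂ) 2) (m₁ m₂ : ℤ),
      H f (m₁, m₂) = 4 * f (m₁, m₂) - f (m₁ + 1, m₂) - f (m₁ - 1, m₂)
        - f (m₁, m₂ + 1) - f (m₁, m₂ - 1) - (q m₂ : ℂ) * f (m₁, m₂)) :
    ∀ x ∈ Set.Icc (0 : ℝ) 8, (x : ℂ) ∈ spectrum ℂ H := by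
  intro x hx
  obtain ⟨hx0, hx8⟩ := hx
  by_contra hspec
  rw [spectrum.notMem_iff] at hspec
  obtain ⟨C, hC0, hC⟩ := inv_bound _ hspec
  -- choose the quasimomenta
  have hm1 : 0 ≤ min x 4 := le_min hx0 (by norm_num)
  have hm2 : min x 4 ≤ 4 := min_le_right _ _
  have hm3 : 0 ≤ x - min x 4 := sub_nonneg.mpr (min_le_left _ _)
  have hm4 : x - min x 4 ≤ 4 := by
    rcases le_total x 4 with h | h
    · rw [min_eq_left h]; linarith
    · rw [min_eq_right h]; linarith
  have hc1 : Real.cos (Real.arccos (1 - min x 4 / 2)) = 1 - min x 4 / 2 :=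
    Real.cos_arccos (by linarith) (by linarith)
  have hc2 : Real.cos (Real.arccos (1 - (x - min x 4) / 2)) = 1 - (x - min x 4) / 2 :=
    Real.cos_arccos (by linarith) (by linarith)
  have hcos : 2 * Real.cos (Real.arccos (1 - min x 4 / 2))
      + 2 * Real.cos (Real.arccos (1 - (x - min x 4) / 2)) = 4 - x := by
    rw [hc1, hc2]; ring
  -- the potential vanishes far out
  obtain ⟨b, hb⟩ := hqfin.bddAbove
  have hL : ∀ m : ℤ, b + 1 ≤ m → q m = 0 := by
    intro m hm
    by_contra h
    have := hb (Function.mem_support.mpr h)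
    omega
  -- choose n large
  set n : ℕ := max 3 (⌈C^2 * 2048⌉₊ + 1) with hn
  have h3 : 3 ≤ n := le_max_left _ _
  have key := weyl_estimate q H hH x (Real.arccos (1 - min x 4 / 2))
    (Real.arccos (1 - (x - min x 4) / 2)) (by rw [abs_of_nonneg hx0]; exact hx8)
    hcos (b + 1) hL C hC n h3
  have hnC : C ^ 2 * 2048 < (n : ℝ) := by
    have h1 : C ^ 2 * 2048 ≤ (⌈C ^ 2 * 2048⌉₊ : ℝ) := Nat.le_ceil _
    have h2 : ((⌈C ^ 2 * 2048⌉₊ + 1 : ℕ) : ℝ) ≤ (n : ℝ) :=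
      Nat.cast_le.mpr (le_max_right _ _)
    push_cast at h2
    linarith
  have hnpos : (0 : ℝ) < n := by
    exact_mod_cast Nat.lt_of_lt_of_le (by norm_num : 0 < 3) h3
  have e : ((n:ℝ))^2 = (n:ℝ) * n := by ring
  have e2 : C ^ 2 * (2048 * (n:ℝ)) = C ^ 2 * 2048 * n := by ring
  rw [e, e2] at key
  linarith [mul_lt_mul_of_pos_right hnC hnpos]
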